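/- Let p, q ≥ 2 be coprime natural numbers, let m ≥ 1, and let k₁, …, k_m be natural numbers with k_j > pq − p − q for every j. Then there exists a unital star-algebra homomorphism from the prime dimension drop algebra I[p,pq,q] to the finite-dimensional star-algebra M_{k₁}(ℂ) × ⋯ × M_{k_m}(ℂ). -/

import Mathlib

open Kronecker

/-- The prime dimension drop algebra `I[p, pq, q]`: continuous functions
`f : [0,1] → M_{pq}(ℂ)` with `f 0 = a ⊗ 1` and `f 1 = 1 ⊗ b`. -/
noncomputable def primeDimDrop (p q : ℕ) :
    StarSubalgebra ℂ C(unitInterval, Matrix (Fin p × Fin q) (Fin p × Fin q) ℂ) where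
  carrier := {f |
    (∃ a : Matrix (Fin p) (Fin p) ℂ, f 0 = a ⊗ₖ (1 : Matrix (Fin q) (Fin q) ℂ)) ∧
    (∃ b : Matrix (Fin q) (Fin q) ℂ, f 1 = (1 : Matrix (Fin p) (Fin p) ℂ) ⊗ₖ b)}
  mul_mem' := by
    rintro f g ⟨⟨a, ha⟩, ⟨b, hb⟩⟩ ⟨⟨a', ha'⟩, ⟨b', hb'⟩⟩
    have h1 : (a ⊗ₖ (1 : Matrix (Fin q) (Fin q) ℂ)) * (a' ⊗ₖ 1) = (a * a') ⊗ₖ 1 := by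
      rw [← Matrix.mul_kronecker_mul, one_mul]
    have h2 : ((1 : Matrix (Fin p) (Fin p) ℂ) ⊗ₖ b) * (1 ⊗ₖ b') = 1 ⊗ₖ (b * b') := by
      rw [← Matrix.mul_kronecker_mul, one_mul]
    exact ⟨⟨a * a', by simp [ha, ha', h1]⟩, ⟨b * b', by simp [hb, hb', h2]⟩⟩
  one_mem' := by
    exact ⟨⟨1, by simp [Matrix.one_kronecker_one]⟩, ⟨1, by simp [Matrix.one_kronecker_one]⟩⟩
  add_mem' := by
    rintro f g ⟨⟨a, ha⟩, ⟨b, hb⟩⟩ ⟨⟨a', ha'⟩, ⟨b', hb'⟩⟩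
    exact ⟨⟨a + a', by simp [ha, ha', Matrix.add_kronecker]⟩,
      ⟨b + b', by simp [hb, hb', Matrix.kronecker_add]⟩⟩
  zero_mem' := by
    exact ⟨⟨0, by simp [Matrix.zero_kronecker]⟩, ⟨0, by simp [Matrix.kronecker_zero]⟩⟩
  algebraMap_mem' := by
    intro c
    refine ⟨⟨c • 1, ?_⟩, ⟨c • 1, ?_⟩⟩ <;>
      simp [Algebra.algebraMap_eq_smul_one, Matrix.smul_kronecker,
        Matrix.kronecker_smul, Matrix.one_kronecker_one]
  star_mem' := by
    rintro f ⟨⟨a, ha⟩, ⟨b, hb⟩⟩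
    have h1 : (a ⊗ₖ (1 : Matrix (Fin q) (Fin q) ℂ)).conjTranspose = a.conjTranspose ⊗ₖ 1 := by
      ext ⟨i, j⟩ ⟨k, l⟩
      by_cases h : j = l <;> simp [Matrix.conjTranspose_apply, Matrix.one_apply, h, Ne.symm]
    have h2 : ((1 : Matrix (Fin p) (Fin p) ℂ) ⊗ₖ b).conjTranspose = 1 ⊗ₖ b.conjTranspose := by
      ext ⟨i, j⟩ ⟨k, l⟩
      by_cases h : i = k <;> simp [Matrix.conjTranspose_apply, Matrix.one_apply, h, Ne.symm]
    exact ⟨⟨a.conjTranspose, by simp [Matrix.star_eq_conjTranspose, ha, h1]⟩,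
      ⟨b.conjTranspose, by simp [Matrix.star_eq_conjTranspose, hb, h2]⟩⟩


section Aux

open Matrix

lemma exists_rep {p q : ℕ} (hp : 2 ≤ p) (hq : 2 ≤ q) (hpq : Nat.Coprime p q)
    {n : ℕ} (hn : p * q - p - q < n) : ∃ α β : ℕ, α * p + β * q = n := by
  have h := frobeniusNumber_pair hpq hp hq
  by_contra hcon
  push_neg at hcon
  have hmem : n ∈ {k | k ∉ AddSubmonoid.closure ({p, q} : Set ℕ)} := by
    intro hmem
    rw [AddSubmonoid.mem_closure_pair] at hmem
    obtain ⟨a, b, hab⟩ := hmem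
    exact hcon a b (by simpa [smul_eq_mul] using hab)
  exact absurd (h.2 hmem) (not_le.mpr hn)

private lemma dbone {p q α β : ℕ} :
    Matrix.fromBlocks (Matrix.blockDiagonal fun _ : Fin α => (1 : Matrix (Fin p) (Fin p) ℂ)) 0 0
      (Matrix.blockDiagonal fun _ : Fin β => (1 : Matrix (Fin q) (Fin q) ℂ)) = 1 := by
  have h1 : (Matrix.blockDiagonal fun _ : Fin α => (1 : Matrix (Fin p) (Fin p) ℂ)) = 1 :=
    Matrix.blockDiagonal_one
  have h2 : (Matrix.blockDiagonal fun _ : Fin β => (1 : Matrix (Fin q) (Fin q) ℂ)) = 1 :=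
    Matrix.blockDiagonal_one
  rw [h1, h2, Matrix.fromBlocks_one]

set_option maxHeartbeats 1600000 in
/-- Block-diagonal star algebra homomorphism `M_p × M_q → M_{(p×α) ⊕ (q×β)}`. -/
noncomputable def dblock (p q α β : ℕ) :
    (Matrix (Fin p) (Fin p) ℂ × Matrix (Fin q) (Fin q) ℂ) →⋆ₐ[ℂ]
      Matrix ((Fin p × Fin α) ⊕ (Fin q × Fin β)) ((Fin p × Fin α) ⊕ (Fin q × Fin β)) ℂ where
  toFun ab := Matrix.fromBlocks (Matrix.blockDiagonal fun _ => ab.1) 0 0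
      (Matrix.blockDiagonal fun _ => ab.2)
  map_one' := dbone
  map_mul' ab cd := by
    show Matrix.fromBlocks (Matrix.blockDiagonal fun _ => ab.1 * cd.1) 0 0
        (Matrix.blockDiagonal fun _ => ab.2 * cd.2) = _
    rw [Matrix.blockDiagonal_mul, Matrix.blockDiagonal_mul, Matrix.fromBlocks_multiply]
    simp only [Matrix.mul_zero, Matrix.zero_mul, add_zero, zero_add]
  map_zero' := by
    show Matrix.fromBlocks (Matrix.blockDiagonal fun _ => (0 : Matrix (Fin p) (Fin p) ℂ)) 0 0
        (Matrix.blockDiagonal fun _ => (0 : Matrix (Fin q) (Fin q) ℂ)) = 0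
    have h1 : (Matrix.blockDiagonal fun _ : Fin α => (0 : Matrix (Fin p) (Fin p) ℂ)) = 0 :=
      Matrix.blockDiagonal_zero
    have h2 : (Matrix.blockDiagonal fun _ : Fin β => (0 : Matrix (Fin q) (Fin q) ℂ)) = 0 :=
      Matrix.blockDiagonal_zero
    rw [h1, h2, Matrix.fromBlocks_zero]
  map_add' ab cd := by
    show Matrix.fromBlocks (Matrix.blockDiagonal fun _ => ab.1 + cd.1) 0 0
          (Matrix.blockDiagonal fun _ => ab.2 + cd.2)
        = Matrix.fromBlocks (Matrix.blockDiagonal fun _ => ab.1) 0 0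
            (Matrix.blockDiagonal fun _ => ab.2)
          + Matrix.fromBlocks (Matrix.blockDiagonal fun _ => cd.1) 0 0
            (Matrix.blockDiagonal fun _ => cd.2)
    rw [Matrix.fromBlocks_add, add_zero, add_zero, ← Matrix.blockDiagonal_add,
      ← Matrix.blockDiagonal_add]
    rfl
  commutes' c := by
    show Matrix.fromBlocks
        (Matrix.blockDiagonal fun _ : Fin α => algebraMap ℂ (Matrix (Fin p) (Fin p) ℂ) c) 0 0
        (Matrix.blockDiagonal fun _ : Fin β => algebraMap ℂ (Matrix (Fin q) (Fin q) ℂ) c)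
      = algebraMap ℂ (Matrix ((Fin p × Fin α) ⊕ (Fin q × Fin β))
          ((Fin p × Fin α) ⊕ (Fin q × Fin β)) ℂ) c
    simp only [Algebra.algebraMap_eq_smul_one]
    have h1 : (Matrix.blockDiagonal fun _ : Fin α => (c • 1 : Matrix (Fin p) (Fin p) ℂ)) =
        c • Matrix.blockDiagonal fun _ : Fin α => (1 : Matrix (Fin p) (Fin p) ℂ) :=
      Matrix.blockDiagonal_smul c _
    have h2 : (Matrix.blockDiagonal fun _ : Fin β => (c • 1 : Matrix (Fin q) (Fin q) ℂ)) =
        c • Matrix.blockDiagonal fun _ : Fin β => (1 : Matrix (Fin q) (Fin q) ℂ) :=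
      Matrix.blockDiagonal_smul c _
    rw [h1, h2, show (0 : Matrix (Fin p × Fin α) (Fin q × Fin β) ℂ) = c • 0 by simp,
      show (0 : Matrix (Fin q × Fin β) (Fin p × Fin α) ℂ) = c • 0 by simp,
      ← Matrix.fromBlocks_smul, dbone]
  map_star' ab := by
    simp only [Matrix.star_eq_conjTranspose, Matrix.fromBlocks_conjTranspose,
      Matrix.blockDiagonal_conjTranspose, Matrix.conjTranspose_zero]
    rfl


/-- Reindexing as a star algebra homomorphism. -/
noncomputable def reindexStarHom {m n : Type*} [Fintype m] [Fintype n] [DecidableEq m]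
    [DecidableEq n] (e : m ≃ n) : Matrix m m ℂ →⋆ₐ[ℂ] Matrix n n ℂ :=
  { (Matrix.reindexAlgEquiv ℂ ℂ e).toAlgHom with
    map_star' := fun M => by
      simp [Matrix.reindexAlgEquiv_apply, Matrix.star_eq_conjTranspose,
        Matrix.conjTranspose_reindex] }

noncomputable def evalFun (p q : ℕ) (hp : 0 < p) (hq : 0 < q)
    (f : C(unitInterval, Matrix (Fin p × Fin q) (Fin p × Fin q) ℂ)) :
    Matrix (Fin p) (Fin p) ℂ × Matrix (Fin q) (Fin q) ℂ :=
  (Matrix.of fun i i' => f 0 (i, ⟨0, hq⟩) (i', ⟨0, hq⟩),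
   Matrix.of fun j j' => f 1 (⟨0, hp⟩, j) (⟨0, hp⟩, j'))

lemma evalFun_eq {p q : ℕ} (hp : 0 < p) (hq : 0 < q)
    (f : C(unitInterval, Matrix (Fin p × Fin q) (Fin p × Fin q) ℂ))
    {a : Matrix (Fin p) (Fin p) ℂ} {b : Matrix (Fin q) (Fin q) ℂ}
    (ha : f 0 = a ⊗ₖ 1) (hb : f 1 = (1 : Matrix (Fin p) (Fin p) ℂ) ⊗ₖ b) :
    evalFun p q hp hq f = (a, b) := by
  refine Prod.ext ?_ ?_
  · show (Matrix.of fun i i' => f 0 (i, ⟨0, hq⟩) (i', ⟨0, hq⟩)) = a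
    rw [ha]; ext i i'; simp [Matrix.one_apply]
  · show (Matrix.of fun j j' => f 1 (⟨0, hp⟩, j) (⟨0, hp⟩, j')) = b
    rw [hb]; ext j j'; simp [Matrix.one_apply]

set_option maxHeartbeats 1600000 in


lemma evalFun_one (p q : ℕ) (hp : 0 < p) (hq : 0 < q) :
    evalFun p q hp hq ((1 : primeDimDrop p q) :
      C(unitInterval, Matrix (Fin p × Fin q) (Fin p × Fin q) ℂ)) = 1 := by
  rw [evalFun_eq hp hq _ (a := 1) (b := 1) (by simp [Matrix.one_kronecker_one])
    (by simp [Matrix.one_kronecker_one])]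
  rfl

lemma evalFun_mul (p q : ℕ) (hp : 0 < p) (hq : 0 < q) (f g : primeDimDrop p q) :
    evalFun p q hp hq ((f * g : primeDimDrop p q) :
        C(unitInterval, Matrix (Fin p × Fin q) (Fin p × Fin q) ℂ))
      = evalFun p q hp hq ↑f * evalFun p q hp hq ↑g := by
  obtain ⟨⟨a, ha⟩, ⟨b, hb⟩⟩ := f.2
  obtain ⟨⟨a', ha'⟩, ⟨b', hb'⟩⟩ := g.2
  have h0 : ((f * g : primeDimDrop p q) :
      C(unitInterval, Matrix (Fin p × Fin q) (Fin p × Fin q) ℂ)) 0 = (a * a') ⊗ₖ 1 := by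
    rw [MulMemClass.coe_mul, ContinuousMap.mul_apply, ha, ha',
      ← Matrix.mul_kronecker_mul, one_mul]
  have h1 : ((f * g : primeDimDrop p q) :
      C(unitInterval, Matrix (Fin p × Fin q) (Fin p × Fin q) ℂ)) 1 = 1 ⊗ₖ (b * b') := by
    rw [MulMemClass.coe_mul, ContinuousMap.mul_apply, hb, hb',
      ← Matrix.mul_kronecker_mul, one_mul]
  rw [evalFun_eq hp hq _ h0 h1, evalFun_eq hp hq _ ha hb, evalFun_eq hp hq _ ha' hb']
  rfl

lemma evalFun_zero (p q : ℕ) (hp : 0 < p) (hq : 0 < q) :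
    evalFun p q hp hq ((0 : primeDimDrop p q) :
      C(unitInterval, Matrix (Fin p × Fin q) (Fin p × Fin q) ℂ)) = 0 := by
  rw [evalFun_eq hp hq _ (a := 0) (b := 0) (by simp [Matrix.zero_kronecker])
    (by simp [Matrix.kronecker_zero])]
  rfl

lemma evalFun_add (p q : ℕ) (hp : 0 < p) (hq : 0 < q) (f g : primeDimDrop p q) :
    evalFun p q hp hq ((f + g : primeDimDrop p q) :
        C(unitInterval, Matrix (Fin p × Fin q) (Fin p × Fin q) ℂ))
      = evalFun p q hp hq ↑f + evalFun p q hp hq ↑g := by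
  obtain ⟨⟨a, ha⟩, ⟨b, hb⟩⟩ := f.2
  obtain ⟨⟨a', ha'⟩, ⟨b', hb'⟩⟩ := g.2
  have h0 : ((f + g : primeDimDrop p q) :
      C(unitInterval, Matrix (Fin p × Fin q) (Fin p × Fin q) ℂ)) 0 = (a + a') ⊗ₖ 1 := by
    rw [AddMemClass.coe_add, ContinuousMap.add_apply, ha, ha', Matrix.add_kronecker]
  have h1 : ((f + g : primeDimDrop p q) :
      C(unitInterval, Matrix (Fin p × Fin q) (Fin p × Fin q) ℂ)) 1 = 1 ⊗ₖ (b + b') := by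
    rw [AddMemClass.coe_add, ContinuousMap.add_apply, hb, hb', Matrix.kronecker_add]
  rw [evalFun_eq hp hq _ h0 h1, evalFun_eq hp hq _ ha hb, evalFun_eq hp hq _ ha' hb']
  rfl

lemma evalFun_algebraMap (p q : ℕ) (hp : 0 < p) (hq : 0 < q) (c : ℂ) :
    evalFun p q hp hq ((algebraMap ℂ (primeDimDrop p q) c : primeDimDrop p q) :
        C(unitInterval, Matrix (Fin p × Fin q) (Fin p × Fin q) ℂ))
      = algebraMap ℂ (Matrix (Fin p) (Fin p) ℂ × Matrix (Fin q) (Fin q) ℂ) c := by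
  have h0 : ((algebraMap ℂ (primeDimDrop p q) c : primeDimDrop p q) :
      C(unitInterval, Matrix (Fin p × Fin q) (Fin p × Fin q) ℂ)) 0 =
      (algebraMap ℂ (Matrix (Fin p) (Fin p) ℂ) c) ⊗ₖ 1 := by
    ext ⟨i, j⟩ ⟨i', j'⟩
    by_cases h : (i, j) = (i', j') <;>
      simp_all [Algebra.algebraMap_eq_smul_one, Matrix.one_apply, Matrix.smul_kronecker,
        Matrix.one_kronecker_one, Prod.ext_iff] <;> tauto
  have h1 : ((algebraMap ℂ (primeDimDrop p q) c : primeDimDrop p q) :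
      C(unitInterval, Matrix (Fin p × Fin q) (Fin p × Fin q) ℂ)) 1 =
      1 ⊗ₖ (algebraMap ℂ (Matrix (Fin q) (Fin q) ℂ) c) := by
    ext ⟨i, j⟩ ⟨i', j'⟩
    by_cases h : (i, j) = (i', j') <;>
      simp_all [Algebra.algebraMap_eq_smul_one, Matrix.one_apply, Matrix.kronecker_smul,
        Matrix.one_kronecker_one, Prod.ext_iff] <;> tauto
  rw [evalFun_eq hp hq _ h0 h1]
  rfl

lemma evalFun_star (p q : ℕ) (hp : 0 < p) (hq : 0 < q) (f : primeDimDrop p q) :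
    evalFun p q hp hq ((star f : primeDimDrop p q) :
        C(unitInterval, Matrix (Fin p × Fin q) (Fin p × Fin q) ℂ))
      = star (evalFun p q hp hq ↑f) := by
  obtain ⟨⟨a, ha⟩, ⟨b, hb⟩⟩ := f.2
  have h0 : ((star f : primeDimDrop p q) :
      C(unitInterval, Matrix (Fin p × Fin q) (Fin p × Fin q) ℂ)) 0 = (star a) ⊗ₖ 1 := by
    show star ((f : C(unitInterval, Matrix (Fin p × Fin q) (Fin p × Fin q) ℂ)) 0) = _
    rw [ha]
    ext ⟨i, j⟩ ⟨i', j'⟩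
    by_cases h : j = j' <;>
      simp [Matrix.star_eq_conjTranspose, Matrix.conjTranspose_apply, Matrix.one_apply, h,
        Ne.symm]
  have h1 : ((star f : primeDimDrop p q) :
      C(unitInterval, Matrix (Fin p × Fin q) (Fin p × Fin q) ℂ)) 1 = 1 ⊗ₖ (star b) := by
    show star ((f : C(unitInterval, Matrix (Fin p × Fin q) (Fin p × Fin q) ℂ)) 1) = _
    rw [hb]
    ext ⟨i, j⟩ ⟨i', j'⟩
    by_cases h : i = i' <;>
      simp [Matrix.star_eq_conjTranspose, Matrix.conjTranspose_apply, Matrix.one_apply, h,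
        Ne.symm]
  rw [evalFun_eq hp hq _ h0 h1, evalFun_eq hp hq _ ha hb]
  rfl

/-- Evaluation at the endpoints as a star algebra homomorphism. -/
noncomputable def evalHom (p q : ℕ) (hp : 0 < p) (hq : 0 < q) :
    primeDimDrop p q →⋆ₐ[ℂ] (Matrix (Fin p) (Fin p) ℂ × Matrix (Fin q) (Fin q) ℂ) where
  toFun f := evalFun p q hp hq (f : C(unitInterval, Matrix (Fin p × Fin q) (Fin p × Fin q) ℂ))
  map_one' := evalFun_one p q hp hq
  map_mul' := evalFun_mul p q hp hq
  map_zero' := evalFun_zero p q hp hq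
  map_add' := evalFun_add p q hp hq
  commutes' := evalFun_algebraMap p q hp hq
  map_star' := evalFun_star p q hp hq

end Aux

theorem primeDimDrop_embeds_in_finiteDimensional (p q m : ℕ) (hp : 2 ≤ p) (hq : 2 ≤ q)
    (hpq : Nat.Coprime p q) (hm : 1 ≤ m) (k : Fin m → ℕ)
    (hk : ∀ j, p * q - p - q < k j) :
    Nonempty ((primeDimDrop p q) →⋆ₐ[ℂ]
      (∀ j : Fin m, Matrix (Fin (k j)) (Fin (k j)) ℂ)) := by
  have hp0 : 0 < p := by omega
  have hq0 : 0 < q := by omega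
  choose α β hαβ using fun j => exists_rep hp hq hpq (hk j)
  let e : ∀ j, ((Fin p × Fin (α j)) ⊕ (Fin q × Fin (β j))) ≃ Fin (k j) := fun j =>
    (Equiv.sumCongr finProdFinEquiv finProdFinEquiv).trans
      (finSumFinEquiv.trans (finCongr (by rw [mul_comm p, mul_comm q]; exact hαβ j)))
  let ψ : ∀ j, primeDimDrop p q →⋆ₐ[ℂ] Matrix (Fin (k j)) (Fin (k j)) ℂ := fun j =>
    ((reindexStarHom (e j)).comp (dblock p q (α j) (β j))).comp (evalHom p q hp0 hq0)
  exact ⟨{ Pi.algHom ℂ _ (fun j => (ψ j).toAlgHom) with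
      map_star' := fun f => funext fun j => map_star (ψ j) f }⟩
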